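/- Let A₁, …, A_{N-1} be nonnegative N×N matrices with positive diagonal entries such that for each i, the directed graph G(A_i) (with edge (j,l) whenever (A_i)_{lj} > 0) has a spanning tree. Then the product A₁A₂⋯A_{N-1} is a scrambling matrix. -/

import Mathlib

/-- The digraph of a nonnegative matrix has a spanning tree: there is a root
from which every vertex is reachable along directed edges, where there is an
edge from `j` to `i` iff `A i j > 0`. -/
def HasSpanningTree {N : ℕ} (A : Matrix (Fin N) (Fin N) ℝ) : Prop :=
  ∃ root : Fin N, ∀ i : Fin N,
    Relation.ReflTransGen (fun j i => 0 < A i j) root i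

/-- A nonnegative matrix is scrambling if every pair of rows has a common
column with positive entries. -/
def Scrambling {N : ℕ} (A : Matrix (Fin N) (Fin N) ℝ) : Prop :=
  ∀ i j : Fin N, ∃ k : Fin N, 0 < A i k ∧ 0 < A j k

namespace ProdScramble

variable {N : ℕ}

/-- A matrix satisfying all our hypotheses. -/
def Good (M : Matrix (Fin N) (Fin N) ℝ) : Prop :=
  (∀ k l, 0 ≤ M k l) ∧ (∀ k, 0 < M k k) ∧ HasSpanningTree M

/-- One step of column-set evolution. -/
noncomputable def nxt (M : Matrix (Fin N) (Fin N) ℝ) (S : Finset (Fin N)) : Finset (Fin N) :=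
  Finset.univ.filter fun k => ∃ j ∈ S, 0 < M j k

/-- Evolve a column set along a list of matrices. -/
noncomputable def evolve (L : List (Matrix (Fin N) (Fin N) ℝ)) (S : Finset (Fin N)) : Finset (Fin N) :=
  L.foldl (fun S M => nxt M S) S

lemma mem_nxt {M : Matrix (Fin N) (Fin N) ℝ} {S : Finset (Fin N)} {k : Fin N} :
    k ∈ nxt M S ↔ ∃ j ∈ S, 0 < M j k := by simp [nxt]

lemma subset_nxt {M : Matrix (Fin N) (Fin N) ℝ} (hdiag : ∀ k, 0 < M k k)
    (S : Finset (Fin N)) : S ⊆ nxt M S := fun k hk => mem_nxt.mpr ⟨k, hk, hdiag k⟩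

@[simp] lemma evolve_nil (S : Finset (Fin N)) : evolve [] S = S := rfl

lemma evolve_cons (M : Matrix (Fin N) (Fin N) ℝ) (L : List (Matrix (Fin N) (Fin N) ℝ))
    (S : Finset (Fin N)) : evolve (M :: L) S = evolve L (nxt M S) := rfl

lemma nxt_nonempty {M : Matrix (Fin N) (Fin N) ℝ} (hdiag : ∀ k, 0 < M k k)
    {S : Finset (Fin N)} (hS : S.Nonempty) : (nxt M S).Nonempty :=
  hS.mono (subset_nxt hdiag S)

lemma evolve_nonempty {L : List (Matrix (Fin N) (Fin N) ℝ)} (hL : ∀ M ∈ L, Good M)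
    {S : Finset (Fin N)} (hS : S.Nonempty) : (evolve L S).Nonempty := by
  induction L generalizing S with
  | nil => exact hS
  | cons M L ih =>
      rw [evolve_cons]
      exact ih (fun M hM => hL M (List.mem_cons_of_mem _ hM))
        (nxt_nonempty (hL M List.mem_cons_self).2.1 hS)

lemma nxt_inter {M : Matrix (Fin N) (Fin N) ℝ} (hdiag : ∀ k, 0 < M k k)
    {S T : Finset (Fin N)} (h : (S ∩ T).Nonempty) : (nxt M S ∩ nxt M T).Nonempty := by
  obtain ⟨k, hk⟩ := h
  rw [Finset.mem_inter] at hk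
  exact ⟨k, Finset.mem_inter.mpr ⟨subset_nxt hdiag S hk.1, subset_nxt hdiag T hk.2⟩⟩

lemma evolve_inter {L : List (Matrix (Fin N) (Fin N) ℝ)} (hL : ∀ M ∈ L, Good M)
    {S T : Finset (Fin N)} (h : (S ∩ T).Nonempty) :
    (evolve L S ∩ evolve L T).Nonempty := by
  induction L generalizing S T with
  | nil => exact h
  | cons M L ih =>
      rw [evolve_cons, evolve_cons]
      exact ih (fun M hM => hL M (List.mem_cons_of_mem _ hM))
        (nxt_inter (hL M List.mem_cons_self).2.1 h)

lemma closed_reach {rel : Fin N → Fin N → Prop} {S : Finset (Fin N)}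
    (hcl : ∀ a b, rel a b → b ∈ S → a ∈ S) {a b : Fin N}
    (h : Relation.ReflTransGen rel a b) (hb : b ∈ S) : a ∈ S := by
  induction h with
  | refl => exact hb
  | tail _ hstep ih => exact ih (hcl _ _ hstep hb)

/-- The key combinatorial step. -/
lemma step {M : Matrix (Fin N) (Fin N) ℝ} (hdiag : ∀ k, 0 < M k k)
    (htree : HasSpanningTree M) {S T : Finset (Fin N)}
    (hS : S.Nonempty) (hT : T.Nonempty) (hST : (S ∩ T) = ∅) :
    (nxt M S ∩ nxt M T).Nonempty ∨ (S ∪ T).card < (nxt M S ∪ nxt M T).card := by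
  by_contra h
  push_neg at h
  obtain ⟨h1, h2⟩ := h
  have hsub : S ∪ T ⊆ nxt M S ∪ nxt M T :=
    Finset.union_subset_union (subset_nxt hdiag S) (subset_nxt hdiag T)
  have heq : S ∪ T = nxt M S ∪ nxt M T := Finset.eq_of_subset_of_card_le hsub h2
  -- nxt M S = S
  have hSeq : nxt M S = S := by
    apply Finset.Subset.antisymm _ (subset_nxt hdiag S)
    intro k hk
    have hkU : k ∈ S ∪ T := by rw [heq]; exact Finset.mem_union_left _ hk
    rcases Finset.mem_union.mp hkU with h' | h'
    · exact h'
    · exfalso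
      have : k ∈ nxt M S ∩ nxt M T :=
        Finset.mem_inter.mpr ⟨hk, subset_nxt hdiag T h'⟩
      simp [h1] at this
  have hTeq : nxt M T = T := by
    apply Finset.Subset.antisymm _ (subset_nxt hdiag T)
    intro k hk
    have hkU : k ∈ S ∪ T := by rw [heq]; exact Finset.mem_union_right _ hk
    rcases Finset.mem_union.mp hkU with h' | h'
    · exfalso
      have : k ∈ nxt M S ∩ nxt M T :=
        Finset.mem_inter.mpr ⟨subset_nxt hdiag S h', hk⟩
      simp [h1] at this
    · exact h'
  obtain ⟨r, hr⟩ := htree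
  obtain ⟨s, hs⟩ := hS
  obtain ⟨t, ht⟩ := hT
  have hclS : ∀ a b : Fin N, (0 < M b a) → b ∈ S → a ∈ S := by
    intro a b hpos hb
    have : a ∈ nxt M S := mem_nxt.mpr ⟨b, hb, hpos⟩
    rwa [hSeq] at this
  have hclT : ∀ a b : Fin N, (0 < M b a) → b ∈ T → a ∈ T := by
    intro a b hpos hb
    have : a ∈ nxt M T := mem_nxt.mpr ⟨b, hb, hpos⟩
    rwa [hTeq] at this
  have hrS : r ∈ S := closed_reach hclS (hr s) hs
  have hrT : r ∈ T := closed_reach hclT (hr t) ht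
  have : r ∈ S ∩ T := Finset.mem_inter.mpr ⟨hrS, hrT⟩
  simp [hST] at this

/-- The chain lemma: either the evolved sets intersect, or the union grows
by at least one per matrix. -/
lemma chain (L : List (Matrix (Fin N) (Fin N) ℝ)) (hL : ∀ M ∈ L, Good M)
    (S T : Finset (Fin N)) (hS : S.Nonempty) (hT : T.Nonempty) :
    (evolve L S ∩ evolve L T).Nonempty ∨
      (S ∪ T).card + L.length ≤ (evolve L S ∪ evolve L T).card := by
  induction L generalizing S T with
  | nil => right; simp
  | cons M L ih =>
      have hM : Good M := hL M List.mem_cons_self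
      have hL' : ∀ M ∈ L, Good M := fun M hM => hL M (List.mem_cons_of_mem _ hM)
      rw [evolve_cons, evolve_cons]
      by_cases hint : (S ∩ T).Nonempty
      · exact Or.inl (evolve_inter hL' (nxt_inter hM.2.1 hint))
      · rw [Finset.not_nonempty_iff_eq_empty] at hint
        rcases step hM.2.1 hM.2.2 hS hT hint with h | h
        · exact Or.inl (evolve_inter hL' h)
        · rcases ih hL' (nxt M S) (nxt M T) (nxt_nonempty hM.2.1 hS)
            (nxt_nonempty hM.2.1 hT) with h' | h'
          · exact Or.inl h'
          · right
            simp only [List.length_cons]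
            omega

lemma listprod_nonneg (L : List (Matrix (Fin N) (Fin N) ℝ))
    (hL : ∀ M ∈ L, ∀ k l, 0 ≤ M k l) : ∀ k l, 0 ≤ L.prod k l := by
  induction L with
  | nil =>
      intro k l
      simp [Matrix.one_apply]
      split <;> norm_num
  | cons M L ih =>
      intro k l
      rw [List.prod_cons, Matrix.mul_apply]
      exact Finset.sum_nonneg fun j _ =>
        mul_nonneg (hL M List.mem_cons_self k j)
          (ih (fun M hM => hL M (List.mem_cons_of_mem _ hM)) j l)

lemma mul_entry_pos_iff {B C : Matrix (Fin N) (Fin N) ℝ}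
    (hB : ∀ k l, 0 ≤ B k l) (hC : ∀ k l, 0 ≤ C k l) {i k : Fin N} :
    0 < (B * C) i k ↔ ∃ j, 0 < B i j ∧ 0 < C j k := by
  rw [Matrix.mul_apply]
  constructor
  · intro h
    by_contra hcon
    push_neg at hcon
    have : ∀ j ∈ Finset.univ, B i j * C j k ≤ 0 := by
      intro j _
      rcases lt_or_eq_of_le (hB i j) with hb | hb
      · have : C j k = 0 := le_antisymm (hcon j hb) (hC j k)
        simp [this]
      · simp [← hb]
    have := Finset.sum_nonpos this
    linarith
  · rintro ⟨j, hj1, hj2⟩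
    apply Finset.sum_pos' (fun l _ => mul_nonneg (hB i l) (hC l k))
    exact ⟨j, Finset.mem_univ j, mul_pos hj1 hj2⟩

lemma prod_pos_iff (L : List (Matrix (Fin N) (Fin N) ℝ))
    (hL : ∀ M ∈ L, ∀ k l, 0 ≤ M k l) (S : Finset (Fin N)) (k : Fin N) :
    (∃ j ∈ S, 0 < L.prod j k) ↔ k ∈ evolve L S := by
  induction L generalizing S with
  | nil =>
      simp only [List.prod_nil, evolve_nil]
      constructor
      · rintro ⟨j, hj, hpos⟩
        rw [Matrix.one_apply] at hpos
        by_cases h : j = k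
        · exact h ▸ hj
        · simp [h] at hpos
      · intro hk
        exact ⟨k, hk, by simp [Matrix.one_apply]⟩
  | cons M L ih =>
      have hM : ∀ k l, 0 ≤ M k l := hL M List.mem_cons_self
      have hL' : ∀ M ∈ L, ∀ k l, 0 ≤ M k l := fun M hM => hL M (List.mem_cons_of_mem _ hM)
      rw [List.prod_cons, evolve_cons, ← ih hL']
      constructor
      · rintro ⟨j, hj, hpos⟩
        rw [mul_entry_pos_iff hM (listprod_nonneg L hL')] at hpos
        obtain ⟨l, hl1, hl2⟩ := hpos
        exact ⟨l, mem_nxt.mpr ⟨j, hj, hl1⟩, hl2⟩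
      · rintro ⟨l, hl, hpos⟩
        obtain ⟨j, hj, hj2⟩ := mem_nxt.mp hl
        exact ⟨j, hj, (mul_entry_pos_iff hM (listprod_nonneg L hL')).mpr ⟨l, hj2, hpos⟩⟩

end ProdScramble

theorem product_scrambling {N : ℕ} (hN : 1 ≤ N)
    (A : Fin (N - 1) → Matrix (Fin N) (Fin N) ℝ)
    (hpos : ∀ i, ∀ k l, 0 ≤ A i k l)
    (hdiag : ∀ i, ∀ k, 0 < A i k k)
    (htree : ∀ i, HasSpanningTree (A i)) :
    Scrambling (List.ofFn A).prod := by
  intro i j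
  set L := List.ofFn A with hLdef
  have hL : ∀ M ∈ L, ProdScramble.Good M := by
    intro M hM
    rw [hLdef, List.mem_ofFn] at hM
    obtain ⟨m, rfl⟩ := hM
    exact ⟨hpos m, hdiag m, htree m⟩
  have hLnn : ∀ M ∈ L, ∀ k l, 0 ≤ M k l := fun M hM => (hL M hM).1
  have key : (ProdScramble.evolve L {i} ∩ ProdScramble.evolve L {j}).Nonempty := by
    by_cases hij : i = j
    · subst hij
      rw [Finset.inter_self]
      exact ProdScramble.evolve_nonempty hL ⟨i, Finset.mem_singleton_self i⟩
    · rcases ProdScramble.chain L hL {i} {j} ⟨i, Finset.mem_singleton_self i⟩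
        ⟨j, Finset.mem_singleton_self j⟩ with h | h
      · exact h
      · exfalso
        have hcard : ({i} ∪ {j} : Finset (Fin N)).card = 2 := by
          rw [← Finset.insert_eq]
          exact Finset.card_pair hij
        have hlen : L.length = N - 1 := by rw [hLdef, List.length_ofFn]
        have hle : (ProdScramble.evolve L {i} ∪ ProdScramble.evolve L {j}).card ≤ N := by
          have := Finset.card_le_univ (ProdScramble.evolve L {i} ∪ ProdScramble.evolve L {j})
          simpa using this
        omega
  obtain ⟨k, hk⟩ := key
  rw [Finset.mem_inter] at hk
  refine ⟨k, ?_, ?_⟩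
  · obtain ⟨j', hj', hp⟩ := (ProdScramble.prod_pos_iff L hLnn {i} k).mpr hk.1
    rwa [Finset.mem_singleton.mp hj'] at hp
  · obtain ⟨j', hj', hp⟩ := (ProdScramble.prod_pos_iff L hLnn {j} k).mpr hk.2
    rwa [Finset.mem_singleton.mp hj'] at hp
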